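/- If a sequence (x_n) in a Banach space X is (p,r)-null, then (x_n) is relatively (p,r)-compact, i.e., there exists (y_k) ∈ ℓ_p(X) such that x_n ∈ (p,r)-conv(y_k) for all n. -/
import Mathlib


open Filter Topology Pointwise

noncomputable section

variable {X : Type*} [NormedAddCommGroup X] [NormedSpace ℝ X]

/-- The `(p,r)`-convex hull of a sequence `z`: all sums `∑ aₖ • zₖ` with `(aₖ)` in the
closed unit ball of `ℓ_r`. -/
def prConv (r : ℝ) (z : ℕ → X) : Set X :=
  {x | ∃ a : ℕ → ℝ, Summable (fun k => |a k| ^ r) ∧ (∑' k, |a k| ^ r) ≤ 1 ∧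
    HasSum (fun k => a k • z k) x}

/-- `z` is absolutely `p`-summable. -/
def MemLpSeq (p : ℝ) (z : ℕ → X) : Prop := Summable fun k => ‖z k‖ ^ p

/-- The `ℓ_p(X)` norm of a sequence. -/
def lpNorm (p : ℝ) (z : ℕ → X) : ℝ := (∑' k, ‖z k‖ ^ p) ^ (1 / p)

/-- `x` is a `(p,r)`-null sequence. -/
def IsPRNull (p r : ℝ) (x : ℕ → X) : Prop :=
  ∀ ε > 0, ∃ z : ℕ → X, MemLpSeq p z ∧ lpNorm p z ≤ ε ∧
    ∃ N : ℕ, ∀ n ≥ N, x n ∈ prConv r z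

/-- `z` is weakly `p`-summable with weak `ℓ_p` norm at most `C`. -/
def WeakLpBound (p : ℝ) (z : ℕ → X) (C : ℝ) : Prop :=
  ∀ f : X →L[ℝ] ℝ, ‖f‖ ≤ 1 →
    Summable (fun k => |f (z k)| ^ p) ∧ (∑' k, |f (z k)| ^ p) ≤ C ^ p

/-- `z` is weakly `p`-summable. -/
def MemWeakLpSeq (p : ℝ) (z : ℕ → X) : Prop := ∃ C, 0 ≤ C ∧ WeakLpBound p z C

/-- `z` is unconditionally `p`-summable: weakly `p`-summable with tails tending to `0`
in the weak `ℓ_p` norm. -/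
def MemUncondLpSeq (p : ℝ) (z : ℕ → X) : Prop :=
  MemWeakLpSeq p z ∧ ∀ ε > 0, ∃ N : ℕ, WeakLpBound p (fun k => z (k + N)) ε

/-- A `(p,r)`-null sequence is relatively `(p,r)`-compact: it is contained in a single
`(p,r)`-convex hull of some `y ∈ ℓ_p(X)`. -/
theorem prNull_relatively_prCompact [CompleteSpace X] (p r : ℝ) (hp : 1 ≤ p) (hr : 1 ≤ r)
    (hpr : 1 ≤ 1 / p + 1 / r) (x : ℕ → X) (hx : IsPRNull p r x) :
    ∃ y : ℕ → X, MemLpSeq p y ∧ ∀ n, x n ∈ prConv r y := by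
  have hp0 : p ≠ 0 := by positivity
  have hr0 : r ≠ 0 := by positivity
  obtain ⟨z, hz, -, N, hN⟩ := hx 1 one_pos
  set y : ℕ → X := fun k => if k % 2 = 0 then (if k / 2 < N then x (k / 2) else 0) else z (k / 2)
    with hy
  have hye : ∀ k, y (2 * k) = if k < N then x k else 0 := by
    intro k; simp only [hy]
    have h1 : (2 * k) % 2 = 0 := by omega
    have h2 : (2 * k) / 2 = k := by omega
    rw [h1, h2]; simp
  have hyo : ∀ k, y (2 * k + 1) = z k := by
    intro k; simp only [hy]
    have h1 : (2 * k + 1) % 2 = 1 := by omega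
    have h2 : (2 * k + 1) / 2 = k := by omega
    rw [h1, h2]; simp
  refine ⟨y, ?_, ?_⟩
  · -- MemLpSeq
    apply Summable.even_add_odd
    · apply summable_of_ne_finset_zero (s := Finset.range N)
      intro k hk
      simp only [Finset.mem_range, not_lt] at hk
      rw [hye k, if_neg (by omega), norm_zero, Real.zero_rpow hp0]
    · simp only [hyo]; exact hz
  · intro n
    rcases lt_or_ge n N with hn | hn
    · -- use indicator at 2n
      refine ⟨fun k => if k = 2 * n then 1 else 0, ?_, ?_, ?_⟩
      · apply summable_of_ne_finset_zero (s := {2 * n})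
        intro k hk
        simp only [Finset.mem_singleton] at hk
        simp only [if_neg hk, abs_zero, Real.zero_rpow hr0]
      · have : (fun k => |if k = 2 * n then (1:ℝ) else 0| ^ r)
            = fun k => if k = 2 * n then (1:ℝ) else 0 := by
          funext k
          split
          · rw [abs_one, Real.one_rpow]
          · rw [abs_zero, Real.zero_rpow hr0]
        rw [this, tsum_ite_eq]
      · have : (fun k => (if k = 2 * n then (1:ℝ) else 0) • y k)
            = fun k => if k = 2 * n then x n else 0 := by
          funext k
          split
          · rename_i h; rw [h, one_smul, hye n, if_pos hn]
          · rw [zero_smul]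
        rw [this]
        exact hasSum_ite_eq (2 * n) (x n)
    · obtain ⟨a, ha1, ha2, ha3⟩ := hN n hn
      set b : ℕ → ℝ := fun k => if k % 2 = 0 then 0 else a (k / 2) with hb
      have hbe : ∀ k, b (2 * k) = 0 := by
        intro k; simp only [hb]; rw [if_pos (by omega)]
      have hbo : ∀ k, b (2 * k + 1) = a k := by
        intro k; simp only [hb]
        have h1 : (2 * k + 1) % 2 = 1 := by omega
        have h2 : (2 * k + 1) / 2 = k := by omega
        rw [h1, h2]; simp
      have hsume : Summable fun k => |b (2 * k)| ^ r := by
        have : (fun k => |b (2 * k)| ^ r) = fun _ => (0:ℝ) := by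
          funext k; rw [hbe, abs_zero, Real.zero_rpow hr0]
        rw [this]; exact summable_zero
      have hsumo : Summable fun k => |b (2 * k + 1)| ^ r := by
        have : (fun k => |b (2 * k + 1)| ^ r) = fun k => |a k| ^ r := by
          funext k; rw [hbo]
        rw [this]; exact ha1
      refine ⟨b, Summable.even_add_odd (f := fun k => |b k| ^ r) hsume hsumo, ?_, ?_⟩
      · rw [← tsum_even_add_odd (f := fun k => |b k| ^ r) hsume hsumo]
        have h1 : (∑' k, |b (2 * k)| ^ r) = 0 := by
          have : (fun k => |b (2 * k)| ^ r) = fun _ => (0:ℝ) := by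
            funext k; rw [hbe, abs_zero, Real.zero_rpow hr0]
          rw [this, tsum_zero]
        have h2 : (∑' k, |b (2 * k + 1)| ^ r) = ∑' k, |a k| ^ r := by
          congr 1; funext k; rw [hbo]
        rw [h1, h2, zero_add]; exact ha2
      · have he : HasSum (fun k => b (2 * k) • y (2 * k)) 0 := by
          have : (fun k => b (2 * k) • y (2 * k)) = fun _ => (0:X) := by
            funext k; rw [hbe, zero_smul]
          rw [this]; exact hasSum_zero
        have ho : HasSum (fun k => b (2 * k + 1) • y (2 * k + 1)) (x n) := by
          have : (fun k => b (2 * k + 1) • y (2 * k + 1)) = fun k => a k • z k := by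
            funext k; rw [hbo, hyo]
          rw [this]; exact ha3
        have := HasSum.even_add_odd (f := fun k => b k • y k) he ho
        rwa [zero_add] at this
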